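/- Let A be a Frobenius category and P its full subcategory of projective objects. Given objects X, Y of A and a short exact sequence 0 → h_X → M → h_Y → 0 in Mod P in which M is a Cohen-Macaulay P-module, the module M is isomorphic to h_Z for some object Z of A. In other words, the essential image of the restricted Yoneda functor h: A → Mod P is closed under extensions inside CM(P). -/

import Mathlib

universe v u

open CategoryTheory Limits

namespace Paper

variable {A : Type u} [Category.{v} A]

section Defs
variable [Preadditive A]

/-- `i` is a kernel of `d`. -/
def IsKer {X Y Z : A} (i : X ⟶ Y) (d : Y ⟶ Z) : Prop :=
  i ≫ d = 0 ∧ ∀ ⦃W : A⦄ (g : W ⟶ Y), g ≫ d = 0 → ∃! g' : W ⟶ X, g' ≫ i = g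

/-- `d` is a cokernel of `i`. -/
def IsCoker {X Y Z : A} (i : X ⟶ Y) (d : Y ⟶ Z) : Prop :=
  i ≫ d = 0 ∧ ∀ ⦃W : A⦄ (g : Y ⟶ W), i ≫ g = 0 → ∃! g' : Z ⟶ W, d ≫ g' = g

/-- An exact structure in the sense of Quillen (following Keller's axioms) on an
additive category `A`: a class of kernel-cokernel pairs (conflations), closed under
isomorphism, satisfying the axioms (Ex0), (Ex1), (Ex1op), (Ex2), (Ex2op). -/
structure ExactStructure (A : Type u) [Category.{v} A] [Preadditive A] where
  /-- the class of conflations `X ⟶ Y ⟶ Z` -/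
  IsConflation : ∀ ⦃X Y Z : A⦄, (X ⟶ Y) → (Y ⟶ Z) → Prop
  ker_of_conflation : ∀ ⦃X Y Z : A⦄ {i : X ⟶ Y} {d : Y ⟶ Z}, IsConflation i d → IsKer i d
  coker_of_conflation : ∀ ⦃X Y Z : A⦄ {i : X ⟶ Y} {d : Y ⟶ Z}, IsConflation i d → IsCoker i d
  iso_closed : ∀ ⦃X Y Z X' Y' Z' : A⦄ {i : X ⟶ Y} {d : Y ⟶ Z} {i' : X' ⟶ Y'} {d' : Y' ⟶ Z'}
    (eX : X ≅ X') (eY : Y ≅ Y') (eZ : Z ≅ Z'),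
    i ≫ eY.hom = eX.hom ≫ i' → d ≫ eZ.hom = eY.hom ≫ d' →
    IsConflation i d → IsConflation i' d'
  ex0 : ∀ ⦃Z : A⦄, IsZero Z → ∃ (X : A) (i : X ⟶ Z), IsConflation i (𝟙 Z)
  ex1 : ∀ ⦃Y Z W : A⦄ {d : Y ⟶ Z} {e : Z ⟶ W},
    (∃ (X : A) (i : X ⟶ Y), IsConflation i d) → (∃ (X : A) (i : X ⟶ Z), IsConflation i e) →
    ∃ (X : A) (i : X ⟶ Y), IsConflation i (d ≫ e)
  ex1op : ∀ ⦃X Y W : A⦄ {i : X ⟶ Y} {j : Y ⟶ W},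
    (∃ (Z : A) (d : Y ⟶ Z), IsConflation i d) → (∃ (Z : A) (d : W ⟶ Z), IsConflation j d) →
    ∃ (Z : A) (d : W ⟶ Z), IsConflation (i ≫ j) d
  ex2 : ∀ ⦃Y Z Z' : A⦄ (d : Y ⟶ Z) (f : Z' ⟶ Z),
    (∃ (X : A) (i : X ⟶ Y), IsConflation i d) →
    ∃ (Y' : A) (d' : Y' ⟶ Z') (f' : Y' ⟶ Y),
      IsPullback d' f' f d ∧ ∃ (X : A) (i : X ⟶ Y'), IsConflation i d'
  ex2op : ∀ ⦃X Y X' : A⦄ (i : X ⟶ Y) (f : X ⟶ X'),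
    (∃ (Z : A) (d : Y ⟶ Z), IsConflation i d) →
    ∃ (Y' : A) (i' : X' ⟶ Y') (f' : Y ⟶ Y'),
      IsPushout i f f' i' ∧ ∃ (Z : A) (d : Y' ⟶ Z), IsConflation i' d

namespace ExactStructure

variable (E : ExactStructure A)

/-- `d` is a deflation. -/
def IsDeflation {Y Z : A} (d : Y ⟶ Z) : Prop :=
  ∃ (X : A) (i : X ⟶ Y), E.IsConflation i d

/-- `i` is an inflation. -/
def IsInflation {X Y : A} (i : X ⟶ Y) : Prop :=
  ∃ (Z : A) (d : Y ⟶ Z), E.IsConflation i d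

/-- projective object: every deflation onto it splits. -/
def Proj (P : A) : Prop :=
  ∀ ⦃Y : A⦄ (d : Y ⟶ P), E.IsDeflation d → ∃ s : P ⟶ Y, s ≫ d = 𝟙 P

/-- injective object: every inflation out of it splits. -/
def Inj (I : A) : Prop :=
  ∀ ⦃Y : A⦄ (i : I ⟶ Y), E.IsInflation i → ∃ r : Y ⟶ I, i ≫ r = 𝟙 I

/-- enough projective objects -/
def EnoughProj : Prop :=
  ∀ X : A, ∃ (P : A) (d : P ⟶ X), E.Proj P ∧ E.IsDeflation d

/-- enough injective objects -/
def EnoughInj : Prop :=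
  ∀ X : A, ∃ (I : A) (i : X ⟶ I), E.Inj I ∧ E.IsInflation i

/-- A Frobenius category: enough projectives, enough injectives, and the two classes coincide. -/
structure IsFrobenius : Prop where
  enoughProj : E.EnoughProj
  enoughInj : E.EnoughInj
  proj_iff_inj : ∀ P : A, E.Proj P ↔ E.Inj P

end ExactStructure

end Defs

section ExactLemmas
namespace ExactStructure
variable [Preadditive A] (E : ExactStructure A)

lemma defl_cancel {Y Z W : A} {d : Y ⟶ Z} (h : E.IsDeflation d) {g g' : Z ⟶ W}
    (hg : d ≫ g = d ≫ g') : g = g' := by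
  obtain ⟨X, i, hc⟩ := h
  obtain ⟨hid, huniv⟩ := E.coker_of_conflation hc
  obtain ⟨x, -, hxu⟩ := huniv (d ≫ g) (by rw [← Category.assoc, hid, zero_comp])
  exact (hxu g rfl).trans (hxu g' hg.symm).symm

lemma conflation_comp {X Y Z Y' : A} {i : X ⟶ Y} {d : Y ⟶ Z} (h : E.IsConflation i d)
    (l : Y ⟶ Y') (m : Y' ⟶ Y) (hlm : l ≫ m = 𝟙 Y) (hml : m ≫ l = 𝟙 Y') :
    E.IsConflation (i ≫ l) (m ≫ d) :=
  E.iso_closed (Iso.refl X) (Iso.mk l m hlm hml) (Iso.refl Z) (by simp)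
    (by show d ≫ 𝟙 Z = l ≫ (m ≫ d)
        rw [Category.comp_id, ← Category.assoc, hlm, Category.id_comp]) h

lemma inflation_comp_iso {X Y Y' : A} {i : X ⟶ Y} (h : E.IsInflation i) (e : Y ≅ Y') :
    E.IsInflation (i ≫ e.hom) := by
  obtain ⟨Z, d, hc⟩ := h
  exact ⟨Z, e.inv ≫ d, E.conflation_comp hc e.hom e.inv e.hom_inv_id e.inv_hom_id⟩

lemma exists_zero_conflation_id [HasZeroObject A] (X : A) :
    ∃ (W : A) (i : W ⟶ X), IsZero W ∧ E.IsConflation i (𝟙 X) := by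
  obtain ⟨Z0, hZ0⟩ := HasZeroObject.zero (C := A)
  obtain ⟨W0, i0, hc0⟩ := E.ex0 hZ0
  obtain ⟨Y', d', f', hpb, hdefl'⟩ := E.ex2 (𝟙 Z0) (hZ0.from_ X) ⟨W0, i0, hc0⟩
  have hcomm : (𝟙 X) ≫ hZ0.from_ X = (hZ0.from_ X) ≫ 𝟙 Z0 := by simp
  set l : X ⟶ Y' := hpb.lift (𝟙 X) (hZ0.from_ X) hcomm with hl
  have hld : l ≫ d' = 𝟙 X := hpb.lift_fst _ _ _
  have hdl : d' ≫ l = 𝟙 Y' := by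
    apply hpb.hom_ext
    · rw [Category.assoc, hld, Category.comp_id, Category.id_comp]
    · exact hZ0.eq_of_tgt _ _
  obtain ⟨W, iW, hcW⟩ := hdefl'
  have h2 := E.conflation_comp hcW d' l hdl hld
  rw [show l ≫ d' = 𝟙 X from hld] at h2
  refine ⟨W, iW ≫ d', ?_, ?_⟩
  · have hker := E.ker_of_conflation h2
    have hiz : iW ≫ d' = 0 := by
      have := hker.1; rwa [Category.comp_id] at this
    rw [IsZero.iff_id_eq_zero]
    obtain ⟨x, -, hxu⟩ := hker.2 (0 : W ⟶ X) (by simp)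
    have h1 : 𝟙 W = x := hxu (𝟙 W) (by show 𝟙 W ≫ iW ≫ d' = 0; rw [Category.id_comp, hiz])
    have h0 : (0 : W ⟶ W) = x := hxu 0 (by simp)
    rw [h1, ← h0]
  · exact h2

lemma isPushout_of_isZero [HasBinaryBiproducts A] {W Q S : A} (hW : IsZero W)
    (f : W ⟶ Q) (g : W ⟶ S) :
    IsPushout f g (biprod.inr : Q ⟶ S ⊞ Q) (biprod.inl : S ⟶ S ⊞ Q) := by
  have hsq : CommSq f g (biprod.inr : Q ⟶ S ⊞ Q) biprod.inl :=
    ⟨by rw [hW.eq_of_src f 0, hW.eq_of_src g 0, zero_comp, zero_comp]⟩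
  exact IsPushout.of_isColimit' hsq
    (PushoutCocone.IsColimit.mk _ (fun s => biprod.desc s.inr s.inl)
      (fun s => by simp) (fun s => by simp)
      (fun s m h1 h2 => by apply biprod.hom_ext' <;> simp [h1, h2]))

lemma inflation_of_isPushout {K Q S T : A} {i : K ⟶ Q} (hi : E.IsInflation i) (f : K ⟶ S)
    {b : Q ⟶ T} {a : S ⟶ T} (hpo : IsPushout i f b a) : E.IsInflation a := by
  obtain ⟨Y', i', f', hP, hinf'⟩ := E.ex2op i f hi
  set l : Y' ⟶ T := hP.desc b a hpo.w with hldef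
  set m : T ⟶ Y' := hpo.desc f' i' hP.w with hmdef
  have h1 : f' ≫ l = b := hP.inl_desc _ _ _
  have h2 : i' ≫ l = a := hP.inr_desc _ _ _
  have h3 : b ≫ m = f' := hpo.inl_desc _ _ _
  have h4 : a ≫ m = i' := hpo.inr_desc _ _ _
  have hlm : l ≫ m = 𝟙 Y' := by
    apply hP.hom_ext
    · rw [← Category.assoc, h1, h3, Category.comp_id]
    · rw [← Category.assoc, h2, h4, Category.comp_id]
  have hml : m ≫ l = 𝟙 T := by
    apply hpo.hom_ext
    · rw [← Category.assoc, h3, h1, Category.comp_id]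
    · rw [← Category.assoc, h4, h2, Category.comp_id]
  obtain ⟨Z, d, hc⟩ := hinf'
  have h5 := E.conflation_comp hc l m hlm hml
  rw [h2] at h5
  exact ⟨Z, m ≫ d, h5⟩

lemma inr_inflation [HasZeroObject A] [HasBinaryBiproducts A] (X K : A) :
    E.IsInflation (biprod.inr : K ⟶ X ⊞ K) := by
  obtain ⟨W, i0, hW, hc⟩ := E.exists_zero_conflation_id X
  have h1 : E.IsInflation (biprod.inl : K ⟶ K ⊞ X) :=
    E.inflation_of_isPushout ⟨X, 𝟙 X, hc⟩ (0 : W ⟶ K) (isPushout_of_isZero hW i0 0)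
  have h2 := E.inflation_comp_iso h1 (biprod.braiding K X)
  have h3 : (biprod.inl : K ⟶ K ⊞ X) ≫ (biprod.braiding K X).hom = biprod.inr := by
    apply biprod.hom_ext <;> simp [biprod.braiding]
  rwa [h3] at h2

lemma isPushout_lift [HasBinaryBiproducts A] {K Q X : A} (i : K ⟶ Q) (g : K ⟶ X) :
    IsPushout i (biprod.lift (-g) (𝟙 K)) (biprod.inr : Q ⟶ X ⊞ Q)
      (biprod.desc biprod.inl (biprod.lift g i)) := by
  have hsq : CommSq i (biprod.lift (-g) (𝟙 K)) (biprod.inr : Q ⟶ X ⊞ Q)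
      (biprod.desc biprod.inl (biprod.lift g i)) := ⟨by
    rw [biprod.lift_desc]
    apply biprod.hom_ext <;> simp⟩
  refine IsPushout.of_isColimit' hsq (PushoutCocone.IsColimit.mk _
    (fun s => biprod.desc (biprod.inl ≫ s.inr) s.inl) (fun s => by simp) ?_ ?_)
  · intro s
    apply biprod.hom_ext'
    · rw [← Category.assoc, biprod.inl_desc, biprod.inl_desc]
    · rw [← Category.assoc, biprod.inr_desc, biprod.lift_desc]
      have hcond : i ≫ s.inl = biprod.lift (-g) (𝟙 K) ≫ s.inr := s.condition
      rw [hcond]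
      rw [← Category.assoc, ← Preadditive.add_comp]
      congr 1
      apply biprod.hom_ext <;> simp
  · intro s mm h1 h2
    apply biprod.hom_ext'
    · have : (biprod.inl : X ⟶ X ⊞ K) ≫ biprod.desc (biprod.inl : X ⟶ X ⊞ Q) (biprod.lift g i)
          = biprod.inl := biprod.inl_desc _ _
      rw [biprod.inl_desc]
      calc biprod.inl ≫ mm = (biprod.inl ≫ biprod.desc (biprod.inl : X ⟶ X ⊞ Q)
            (biprod.lift g i)) ≫ mm := by rw [this]
        _ = biprod.inl ≫ s.inr := by rw [Category.assoc, h2]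
    · rw [biprod.inr_desc]; exact h1

lemma lift_inflation [HasZeroObject A] [HasBinaryBiproducts A] {K Q : A} {i : K ⟶ Q}
    (hi : E.IsInflation i) {X : A} (g : K ⟶ X) : E.IsInflation (biprod.lift g i) := by
  have h1 := E.inflation_of_isPushout hi _ (isPushout_lift i g)
  have h3 := E.ex1op (E.inr_inflation X K) h1
  rwa [biprod.inr_desc] at h3

lemma proj_lift {P R K : A} (hP : E.Proj P) {q : R ⟶ K} (hq : E.IsDeflation q) (s : P ⟶ K) :
    ∃ s' : P ⟶ R, s' ≫ q = s := by
  obtain ⟨Y', d', f', hpb, hd'⟩ := E.ex2 q s hq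
  obtain ⟨σ, hσ⟩ := hP d' hd'
  exact ⟨σ ≫ f', by rw [Category.assoc, ← hpb.w, ← Category.assoc, hσ, Category.id_comp]⟩

end ExactStructure
end ExactLemmas

end Paper
namespace Paper

open CategoryTheory Limits

section Modules

variable (C : Type u) [Category.{v} C] [Preadditive C]

/-- The category `Mod C` of (additive) contravariant functors from `C` to abelian
groups; a Cohen-Macaulay module is automatically additive, so we work in the ambient
functor category, which has the same Hom-groups. -/
abbrev ModC := Cᵒᵖ ⥤ AddCommGrpCat.{v}

/-- A `C`-module is finitely generated projective iff it is a direct summand of a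
representable module `H_X = Hom_C(-, X)`. -/
def IsFGProj (M : ModC C) : Prop :=
  ∃ (X : C) (s : M ⟶ preadditiveYoneda.obj X) (r : preadditiveYoneda.obj X ⟶ M),
    s ≫ r = 𝟙 M

/-- `0 ⟶ L ⟶u M ⟶v N ⟶ 0` is a short exact sequence of `C`-modules
(exactness is objectwise). -/
def IsSES {L M N : ModC C} (u : L ⟶ M) (v : M ⟶ N) : Prop :=
  ∀ c : Cᵒᵖ, Function.Injective (u.app c) ∧ Function.Surjective (v.app c) ∧
    ∀ x : M.obj c, (v.app c) x = 0 ↔ ∃ y : L.obj c, (u.app c) y = x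

/-- A totally acyclic complex: an acyclic complex of finitely generated projective
`C`-modules such that `Hom(P^•, H_X)` is acyclic for every object `X` of `C`. -/
structure IsTotallyAcyclic (P : ℤ → ModC C) (d : ∀ n : ℤ, P n ⟶ P (n + 1)) : Prop where
  fgProj : ∀ n, IsFGProj C (P n)
  comp_zero : ∀ n, d n ≫ d (n + 1) = 0
  acyclic : ∀ (n : ℤ) (c : Cᵒᵖ) (x : (P (n + 1)).obj c),
    ((d (n + 1)).app c) x = 0 → ∃ y : (P n).obj c, ((d n).app c) y = x
  hom_acyclic : ∀ (n : ℤ) (X : C) (g : P (n + 1) ⟶ preadditiveYoneda.obj X),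
    d n ≫ g = 0 → ∃ h : P (n + 1 + 1) ⟶ preadditiveYoneda.obj X, d (n + 1) ≫ h = g

/-- A `C`-module is (maximal) Cohen-Macaulay iff it is isomorphic to the `0`-th
cocycle `Z^0(P^•)` (i.e. the kernel of `d^0`) of some totally acyclic complex. -/
def IsCM (M : ModC C) : Prop :=
  ∃ (P : ℤ → ModC C) (d : ∀ n : ℤ, P n ⟶ P (n + 1)), IsTotallyAcyclic C P d ∧
    ∃ ι : M ⟶ P 0, ι ≫ d 0 = 0 ∧ ∀ c : Cᵒᵖ,
      Function.Injective (ι.app c) ∧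
      ∀ x : (P 0).obj c, ((d 0).app c) x = 0 → ∃ m : M.obj c, (ι.app c) m = x

end Modules

section ResYoneda

variable {A : Type u} [Category.{v} A] [Preadditive A]

/-- The full subcategory `P` of projective objects of `(A, E)`. -/
abbrev ProjCat (E : ExactStructure A) := ObjectProperty.FullSubcategory (fun P : A => E.Proj P)

/-- The restricted Yoneda functor `h : A ⥤ Mod P`, sending `X` to
`h_X = Hom_A(-, X)|_P`. -/
def resYoneda (E : ExactStructure A) : A ⥤ ModC (ProjCat E) :=
  preadditiveYoneda ⋙
    (Functor.whiskeringLeft (ProjCat E)ᵒᵖ Aᵒᵖ AddCommGrpCat.{v}).obj (ObjectProperty.ι _).op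

end ResYoneda

end Paper

namespace Paper
open CategoryTheory Limits

section ModLemmas
variable {A : Type u} [Category.{v} A] [Preadditive A] (E : ExactStructure A)

/-- view a morphism as an element of a restricted–Yoneda module -/
def elt {X : A} {c : (ProjCat E)ᵒᵖ} (s : c.unop.obj ⟶ X) : ((resYoneda E).obj X).obj c := s

/-- view an element of a restricted–Yoneda module as a morphism -/
def asMor {X : A} {c : (ProjCat E)ᵒᵖ} (x : ((resYoneda E).obj X).obj c) : c.unop.obj ⟶ X := x

/-- a morphism of `A` between (underlying objects of) projectives, as a morphism in
`(ProjCat E)ᵒᵖ` -/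
def toHom {c d : (ProjCat E)ᵒᵖ} (s : d.unop.obj ⟶ c.unop.obj) : c ⟶ d :=
  Quiver.Hom.op (X := d.unop) (Y := c.unop) (ObjectProperty.homMk s)

lemma resYoneda_map_toHom {X : A} {c d : (ProjCat E)ᵒᵖ} (s : d.unop.obj ⟶ c.unop.obj)
    (x : ((resYoneda E).obj X).obj c) :
    ((resYoneda E).obj X).map (toHom E s) x = elt E (s ≫ asMor E x) := rfl

lemma elt_add {X : A} {c : (ProjCat E)ᵒᵖ} (s s' : c.unop.obj ⟶ X) :
    elt E (s + s') = elt E s + elt E s' := rfl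

lemma asMor_elt {X : A} {c : (ProjCat E)ᵒᵖ} (s : c.unop.obj ⟶ X) : asMor E (elt E s) = s := rfl

lemma elt_asMor {X : A} {c : (ProjCat E)ᵒᵖ} (x : ((resYoneda E).obj X).obj c) :
    elt E (asMor E x) = x := rfl

lemma nat_app {F G : ModC (ProjCat E)} (α : F ⟶ G) {c d : (ProjCat E)ᵒᵖ} (φ : c ⟶ d)
    (x : F.obj c) : α.app d (F.map φ x) = G.map φ (α.app c x) :=
  ConcreteCategory.congr_hom (α.naturality φ) x

lemma toHom_comp {c d : (ProjCat E)ᵒᵖ} {Qp : ProjCat E} (s : c.unop.obj ⟶ Qp.obj) (φ : c ⟶ d) :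
    toHom E ((show d.unop.obj ⟶ c.unop.obj from φ.unop.hom) ≫ s)
      = toHom (c := Opposite.op Qp) E s ≫ φ := rfl

end ModLemmas

section MainLemmas
variable {A : Type u} [Category.{v} A] [Preadditive A] (E : ExactStructure A)

lemma elt_zero {X : A} {c : (ProjCat E)ᵒᵖ} : elt E (0 : c.unop.obj ⟶ X) = 0 := rfl

lemma map_add_of_fgproj_emb {M N : ModC (ProjCat E)} (ι : M ⟶ N)
    (hinj : ∀ c, Function.Injective (ι.app c)) (hN : IsFGProj (ProjCat E) N)
    {c d : (ProjCat E)ᵒᵖ} (s₁ s₂ : d.unop.obj ⟶ c.unop.obj) (m : M.obj c) :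
    M.map (toHom E (s₁ + s₂)) m = M.map (toHom E s₁) m + M.map (toHom E s₂) m := by
  obtain ⟨X₀, sN, rN, hsr⟩ := hN
  apply hinj d
  rw [map_add, nat_app E ι, nat_app E ι, nat_app E ι]
  set n : N.obj c := ι.app c m with hn
  have hnx : rN.app c (sN.app c n) = n := by
    have := congrArg (fun (f : N ⟶ N) => f.app c n) hsr
    simpa using this
  have key : ∀ (s : d.unop.obj ⟶ c.unop.obj), N.map (toHom E s) n
      = rN.app d ((preadditiveYoneda.obj X₀).map (toHom E s) (sN.app c n)) := by
    intro s
    conv_lhs => rw [← hnx]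
    exact (nat_app E rN (toHom E s) (sN.app c n)).symm
  rw [key, key, key]
  have Hadd : (preadditiveYoneda.obj X₀).map (toHom E (s₁ + s₂)) (sN.app c n)
      = (preadditiveYoneda.obj X₀).map (toHom E s₁) (sN.app c n)
        + (preadditiveYoneda.obj X₀).map (toHom E s₂) (sN.app c n) :=
    Preadditive.add_comp _ _ _ (ObjectProperty.homMk (P := fun P : A => E.Proj P) (X := d.unop) (Y := c.unop) s₁) (ObjectProperty.homMk (P := fun P : A => E.Proj P) (X := d.unop) (Y := c.unop) s₂)
      (sN.app c n)
  rw [Hadd, map_add]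

lemma resYoneda_full_aux [HasZeroObject A] [HasBinaryBiproducts A] (hE : E.IsFrobenius)
    {K X : A} (ψ : (resYoneda E).obj K ⟶ (resYoneda E).obj X) :
    ∃ g : K ⟶ X, ∀ (c : (ProjCat E)ᵒᵖ) (s : c.unop.obj ⟶ K),
      ψ.app c (elt E s) = elt E (s ≫ g) := by
  obtain ⟨R, q, hRproj, hqdefl⟩ := hE.enoughProj K
  obtain ⟨KR, kR, hcR⟩ := hqdefl
  set Rp : ProjCat E := ⟨R, hRproj⟩ with hRpdef
  set g₀ : R ⟶ X := asMor E (ψ.app (Opposite.op Rp) (elt E q)) with hg₀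
  obtain ⟨R₂, r, hR₂proj, hrdefl⟩ := hE.enoughProj KR
  set R₂p : ProjCat E := ⟨R₂, hR₂proj⟩ with hR₂pdef
  have h1 : (r ≫ kR) ≫ g₀ = 0 := by
    have hnat := nat_app E ψ (toHom (c := Opposite.op Rp) (d := Opposite.op R₂p) E (r ≫ kR))
      (elt E q)
    rw [resYoneda_map_toHom, resYoneda_map_toHom, asMor_elt, ← hg₀] at hnat
    rw [show (r ≫ kR) ≫ q = 0 from by
        rw [Category.assoc, (E.ker_of_conflation hcR).1, comp_zero], elt_zero, map_zero] at hnat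
    exact (congrArg (asMor E) hnat).symm
  have h2 : kR ≫ g₀ = 0 :=
    E.defl_cancel hrdefl (by rw [comp_zero, ← Category.assoc, h1])
  obtain ⟨g, hgq, -⟩ := (E.coker_of_conflation hcR).2 g₀ h2
  refine ⟨g, fun c s => ?_⟩
  obtain ⟨s', hs'⟩ := E.proj_lift c.unop.property ⟨KR, kR, hcR⟩ s
  have hnat := nat_app E ψ (toHom (c := Opposite.op Rp) (d := c) E s') (elt E q)
  rw [resYoneda_map_toHom, resYoneda_map_toHom, asMor_elt, ← hg₀, hs'] at hnat
  rw [hnat, ← hgq, ← Category.assoc, hs']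

end MainLemmas

end Paper

namespace Paper

open CategoryTheory Limits

set_option maxHeartbeats 2000000 in
/-- **Theorem (Step 3 of Theorem 4.2).** For a Frobenius category `A`, the essential
image of the restricted Yoneda functor `h : A ⥤ Mod P` is closed under extensions
inside the Cohen-Macaulay modules: if `0 → h_X → M → h_Y → 0` is a short exact
sequence of `P`-modules with `M` Cohen-Macaulay, then `M ≅ h_Z` for some `Z` in `A`. -/
theorem resYoneda_essImage_extension_closed
    {A : Type u} [Category.{v} A] [Preadditive A] [HasZeroObject A] [HasBinaryBiproducts A]
    (E : ExactStructure A) (hE : E.IsFrobenius) (X Y : A) (M : ModC (ProjCat E))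
    (hM : IsCM (ProjCat E) M)
    (u : (resYoneda E).obj X ⟶ M) (v : M ⟶ (resYoneda E).obj Y)
    (huv : IsSES (ProjCat E) u v) :
    ∃ Z : A, Nonempty (M ≅ (resYoneda E).obj Z) := by
  classical
  obtain ⟨Pc, dc, hTA, ι, hι0, hιprop⟩ := hM
  have hMadd : ∀ {c d : (ProjCat E)ᵒᵖ} (s₁ s₂ : d.unop.obj ⟶ c.unop.obj) (m : M.obj c),
      M.map (toHom E (s₁ + s₂)) m = M.map (toHom E s₁) m + M.map (toHom E s₂) m :=
    fun s₁ s₂ m => map_add_of_fgproj_emb E ι (fun c => (hιprop c).1) (hTA.fgProj 0) s₁ s₂ m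
  obtain ⟨Q, p, hQproj, hpdefl0⟩ := hE.enoughProj Y
  obtain ⟨K, i, hconf⟩ := hpdefl0
  have hpdefl : E.IsDeflation p := ⟨K, i, hconf⟩
  set Qp : ProjCat E := ⟨Q, hQproj⟩ with hQpdef
  obtain ⟨m₀, hm₀⟩ := (huv (Opposite.op Qp)).2.1
    (elt E (X := Y) (c := Opposite.op Qp) p)
  -- the lift t : h_Q ⟶ M of h_p through v
  let t : (resYoneda E).obj Q ⟶ M :=
    { app := fun c => AddCommGrpCat.ofHom <| AddMonoidHom.mk'
        (fun s => M.map (toHom (c := Opposite.op Qp) E (asMor E s)) m₀)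
        (fun s₁ s₂ => by exact hMadd (asMor E (X := Q) (c := c) s₁) (asMor E (X := Q) (c := c) s₂) m₀)
      naturality := fun c d φ => by
        ext s
        show M.map (toHom (c := Opposite.op Qp) E (asMor E (((resYoneda E).obj Q).map φ s))) m₀
          = M.map φ (M.map (toHom (c := Opposite.op Qp) E (asMor E s)) m₀)
        rw [show (toHom (c := Opposite.op Qp) E (asMor E (((resYoneda E).obj Q).map φ s)))
            = toHom (c := Opposite.op Qp) E (asMor E s) ≫ φ from rfl]
        exact ConcreteCategory.congr_hom (M.map_comp _ _) m₀ }
  have htapp : ∀ (c : (ProjCat E)ᵒᵖ) (s : c.unop.obj ⟶ Q),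
      t.app c (elt E s) = M.map (toHom (c := Opposite.op Qp) E s) m₀ := fun _ _ => rfl
  have htv : ∀ (c : (ProjCat E)ᵒᵖ) (s : c.unop.obj ⟶ Q),
      v.app c (t.app c (elt E s)) = elt E (s ≫ p) := by
    intro c s
    have h := nat_app E v (toHom (c := Opposite.op Qp) E s) m₀
    rw [hm₀] at h
    rw [htapp]
    exact h.trans (by rw [resYoneda_map_toHom, asMor_elt])
  -- the map w : h_{X ⊞ Q} ⟶ M
  let w : (resYoneda E).obj (X ⊞ Q) ⟶ M :=
    { app := fun c => AddCommGrpCat.ofHom <| AddMonoidHom.mk'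
        (fun s => u.app c (elt E (asMor E s ≫ biprod.fst))
          + t.app c (elt E (asMor E s ≫ biprod.snd)))
        (fun s₁ s₂ => by
          show u.app c (elt E (asMor E (s₁ + s₂) ≫ biprod.fst))
              + t.app c (elt E (asMor E (s₁ + s₂) ≫ biprod.snd))
            = (u.app c (elt E (asMor E s₁ ≫ biprod.fst))
                + t.app c (elt E (asMor E s₁ ≫ biprod.snd)))
              + (u.app c (elt E (asMor E s₂ ≫ biprod.fst))
                + t.app c (elt E (asMor E s₂ ≫ biprod.snd)))
          rw [show elt E (asMor E (s₁ + s₂) ≫ (biprod.fst : X ⊞ Q ⟶ X))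
              = elt E (asMor E s₁ ≫ biprod.fst) + elt E (asMor E s₂ ≫ biprod.fst)
              from congrArg (elt E) (Preadditive.add_comp _ _ _ _ _ _),
            show elt E (asMor E (s₁ + s₂) ≫ (biprod.snd : X ⊞ Q ⟶ Q))
              = elt E (asMor E s₁ ≫ biprod.snd) + elt E (asMor E s₂ ≫ biprod.snd)
              from congrArg (elt E) (Preadditive.add_comp _ _ _ _ _ _),
            map_add, map_add]
          abel)
      naturality := fun c d φ => by
        ext s
        show u.app d (elt E (asMor E (((resYoneda E).obj (X ⊞ Q)).map φ s) ≫ biprod.fst))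
            + t.app d (elt E (asMor E (((resYoneda E).obj (X ⊞ Q)).map φ s) ≫ biprod.snd))
            = M.map φ (u.app c (elt E (asMor E s ≫ biprod.fst))
              + t.app c (elt E (asMor E s ≫ biprod.snd)))
        rw [show asMor E (((resYoneda E).obj (X ⊞ Q)).map φ s)
            = (show d.unop.obj ⟶ c.unop.obj from φ.unop.hom) ≫ asMor E s from rfl,
          Category.assoc, Category.assoc, map_add]
        congr 1
        · rw [show elt E ((show d.unop.obj ⟶ c.unop.obj from φ.unop.hom)
              ≫ (asMor E s ≫ biprod.fst))
              = ((resYoneda E).obj X).map φ (elt E (asMor E s ≫ biprod.fst)) from rfl]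
          exact nat_app E u φ _
        · rw [show elt E ((show d.unop.obj ⟶ c.unop.obj from φ.unop.hom)
              ≫ (asMor E s ≫ biprod.snd))
              = ((resYoneda E).obj Q).map φ (elt E (asMor E s ≫ biprod.snd)) from rfl]
          exact nat_app E t φ _ }
  have hwapp : ∀ (c : (ProjCat E)ᵒᵖ) (s : c.unop.obj ⟶ X ⊞ Q),
      w.app c (elt E s) = u.app c (elt E (s ≫ biprod.fst))
        + t.app c (elt E (s ≫ biprod.snd)) := fun _ _ => rfl
  -- surjectivity of w
  have hwsurj : ∀ (c : (ProjCat E)ᵒᵖ) (m : M.obj c),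
      ∃ s : c.unop.obj ⟶ X ⊞ Q, w.app c (elt E s) = m := by
    intro c m
    obtain ⟨sq, hsq⟩ := E.proj_lift c.unop.property hpdefl (asMor E (v.app c m))
    have hv0 : v.app c (m - t.app c (elt E sq)) = 0 := by
      rw [map_sub, htv c sq, show elt E (sq ≫ p) = v.app c m from by rw [hsq]; rfl, sub_self]
    obtain ⟨a, ha⟩ := ((huv c).2.2 _).mp hv0
    refine ⟨biprod.lift (asMor E a) sq, ?_⟩
    rw [hwapp, show biprod.lift (asMor E a) sq ≫ biprod.fst = asMor E a from
        biprod.lift_fst _ _, show biprod.lift (asMor E a) sq ≫ biprod.snd = sq from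
        biprod.lift_snd _ _, elt_asMor, ha]
    abel
  -- the connecting morphism ψ : h_K ⟶ h_X and its representing morphism g
  have hexu : ∀ (c : (ProjCat E)ᵒᵖ) (s : c.unop.obj ⟶ K),
      ∃ a : ((resYoneda E).obj X).obj c, u.app c a = - t.app c (elt E (s ≫ i)) := by
    intro c s
    apply ((huv c).2.2 _).mp
    rw [map_neg, htv c (s ≫ i), show (s ≫ i) ≫ p = 0 from by
        rw [Category.assoc, (E.ker_of_conflation hconf).1, comp_zero], elt_zero, neg_zero]
  let ψ : (resYoneda E).obj K ⟶ (resYoneda E).obj X :=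
    { app := fun c => AddCommGrpCat.ofHom <| AddMonoidHom.mk' (fun s => (hexu c (asMor E s)).choose)
        (fun s₁ s₂ => (huv c).1 (by
          show u.app c ((hexu c (asMor E (s₁ + s₂))).choose)
            = u.app c ((hexu c (asMor E s₁)).choose + (hexu c (asMor E s₂)).choose)
          rw [map_add, (hexu c (asMor E (s₁ + s₂))).choose_spec,
            (hexu c (asMor E s₁)).choose_spec, (hexu c (asMor E s₂)).choose_spec,
            show elt E (asMor E (s₁ + s₂) ≫ i)
              = elt E (asMor E s₁ ≫ i) + elt E (asMor E s₂ ≫ i)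
              from congrArg (elt E) (Preadditive.add_comp _ _ _ _ _ _),
            map_add, neg_add]))
      naturality := fun c d φ => by
        ext s
        apply (huv d).1
        show u.app d ((hexu d (asMor E (((resYoneda E).obj K).map φ s))).choose)
          = u.app d (((resYoneda E).obj X).map φ ((hexu c (asMor E s)).choose))
        rw [(hexu d (asMor E (((resYoneda E).obj K).map φ s))).choose_spec]
        rw [nat_app E u φ ((hexu c (asMor E s)).choose),
          (hexu c (asMor E s)).choose_spec, map_neg]
        rw [show elt E (asMor E (((resYoneda E).obj K).map φ s) ≫ i)
            = ((resYoneda E).obj Q).map φ (elt E (asMor E s ≫ i)) from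
            congrArg (elt E) (Category.assoc _ _ _), nat_app E t φ] }
  obtain ⟨g, hgψ⟩ := resYoneda_full_aux E hE ψ
  have hgu : ∀ (c : (ProjCat E)ᵒᵖ) (s : c.unop.obj ⟶ K),
      u.app c (elt E (s ≫ g)) = - t.app c (elt E (s ≫ i)) := by
    intro c s
    rw [← hgψ c s]
    exact (hexu c s).choose_spec
  -- the conflation K ⟶ X ⊞ Q ⟶ Z
  obtain ⟨Z, dZ, hcZ⟩ := E.lift_inflation ⟨Y, p, hconf⟩ g
  have hdZdefl : E.IsDeflation dZ := ⟨K, biprod.lift g i, hcZ⟩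
  -- w kills the image of h_K
  have hwj0 : ∀ (c : (ProjCat E)ᵒᵖ) (k : c.unop.obj ⟶ K),
      w.app c (elt E (k ≫ biprod.lift g i)) = 0 := by
    intro c k
    rw [hwapp, show (k ≫ biprod.lift g i) ≫ biprod.fst = k ≫ g from by
        rw [Category.assoc, biprod.lift_fst],
      show (k ≫ biprod.lift g i) ≫ biprod.snd = k ≫ i from by
        rw [Category.assoc, biprod.lift_snd], hgu c k, neg_add_cancel]
  -- kernel of w is the image of h_K
  have hwker : ∀ (c : (ProjCat E)ᵒᵖ) (s : c.unop.obj ⟶ X ⊞ Q), w.app c (elt E s) = 0 →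
      ∃ k : c.unop.obj ⟶ K, k ≫ biprod.lift g i = s := by
    intro c s hs
    have h3 : u.app c (elt E (s ≫ biprod.fst)) + t.app c (elt E (s ≫ biprod.snd)) = 0 :=
      (hwapp c s).symm.trans hs
    have h' : v.app c (u.app c (elt E (s ≫ biprod.fst))
        + t.app c (elt E (s ≫ biprod.snd))) = 0 := by rw [h3, map_zero]
    rw [map_add, ((huv c).2.2 _).mpr ⟨_, rfl⟩, zero_add, htv] at h'
    have hvb : (s ≫ biprod.snd) ≫ p = 0 := congrArg (asMor E) h'
    obtain ⟨k, hk, -⟩ := (E.ker_of_conflation hconf).2 (s ≫ biprod.snd) hvb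
    refine ⟨k, ?_⟩
    apply biprod.hom_ext
    · rw [Category.assoc, biprod.lift_fst]
      have h2 : u.app c (elt E (k ≫ g)) = u.app c (elt E (s ≫ biprod.fst)) := by
        rw [hgu c k, hk]
        exact neg_eq_of_add_eq_zero_left h3
      exact congrArg (asMor E) ((huv c).1 h2)
    · rw [Category.assoc, biprod.lift_snd]; exact hk
  -- construction of θ : M ≅ h_Z
  have hθwd : ∀ (c : (ProjCat E)ᵒᵖ) (s s' : c.unop.obj ⟶ X ⊞ Q),
      w.app c (elt E s) = w.app c (elt E s') → s ≫ dZ = s' ≫ dZ := by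
    intro c s s' h
    have h0 : w.app c (elt E (s - s')) = 0 := by
      rw [show elt E (s - s') = elt E s - elt E s' from rfl, map_sub, h, sub_self]
    obtain ⟨k, hk⟩ := hwker c _ h0
    have hz : (s - s') ≫ dZ = 0 := by
      rw [← hk, Category.assoc, (E.ker_of_conflation hcZ).1, comp_zero]
    rw [Preadditive.sub_comp] at hz
    exact sub_eq_zero.mp hz
  set θapp : ∀ c : (ProjCat E)ᵒᵖ, M.obj c → ((resYoneda E).obj Z).obj c := fun c m =>
    elt E ((hwsurj c m).choose ≫ dZ) with hθappdef
  have hθspec : ∀ (c : (ProjCat E)ᵒᵖ) (m : M.obj c) (s : c.unop.obj ⟶ X ⊞ Q),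
      w.app c (elt E s) = m → θapp c m = elt E (s ≫ dZ) := fun c m s hs =>
    congrArg (elt E) (hθwd c _ s ((hwsurj c m).choose_spec.trans hs.symm))
  let θ : M ⟶ (resYoneda E).obj Z :=
    { app := fun c => AddCommGrpCat.ofHom <| AddMonoidHom.mk' (θapp c) (fun m₁ m₂ => by
        obtain ⟨s₁, hs₁⟩ := hwsurj c m₁
        obtain ⟨s₂, hs₂⟩ := hwsurj c m₂
        rw [hθspec c m₁ s₁ hs₁, hθspec c m₂ s₂ hs₂,
          hθspec c (m₁ + m₂) (s₁ + s₂) (by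
            rw [show elt E (s₁ + s₂) = elt E s₁ + elt E s₂ from rfl, map_add, hs₁, hs₂]),
          show elt E ((s₁ + s₂) ≫ dZ) = elt E (s₁ ≫ dZ) + elt E (s₂ ≫ dZ) from
            congrArg (elt E) (Preadditive.add_comp _ _ _ _ _ _)]; rfl)
      naturality := fun c d φ => by
        ext m
        obtain ⟨s, hs⟩ := hwsurj c m
        have hs' : w.app d (elt E ((show d.unop.obj ⟶ c.unop.obj from φ.unop.hom) ≫ s))
            = M.map φ m := by
          rw [show elt E ((show d.unop.obj ⟶ c.unop.obj from φ.unop.hom) ≫ s)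
              = ((resYoneda E).obj (X ⊞ Q)).map φ (elt E s) from rfl, nat_app E w φ, hs]
        show θapp d (M.map φ m) = ((resYoneda E).obj Z).map φ (θapp c m)
        rw [hθspec d _ _ hs', hθspec c m s hs,
          show ((resYoneda E).obj Z).map φ (elt E (s ≫ dZ))
            = elt E ((show d.unop.obj ⟶ c.unop.obj from φ.unop.hom) ≫ (s ≫ dZ)) from rfl]
        exact congrArg (elt E) (Category.assoc _ _ _) }
  have hbij : ∀ c, Function.Bijective (θ.app c) := by
    intro c
    constructor
    · intro m₁ m₂ h
      obtain ⟨s₁, hs₁⟩ := hwsurj c m₁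
      obtain ⟨s₂, hs₂⟩ := hwsurj c m₂
      rw [show θ.app c m₁ = θapp c m₁ from rfl, show θ.app c m₂ = θapp c m₂ from rfl,
        hθspec c m₁ s₁ hs₁, hθspec c m₂ s₂ hs₂] at h
      have hdz : s₁ ≫ dZ = s₂ ≫ dZ := congrArg (asMor E) h
      have h' : (s₁ - s₂) ≫ dZ = 0 := by
        rw [Preadditive.sub_comp, hdz, sub_self]
      obtain ⟨k, hk, -⟩ := (E.ker_of_conflation hcZ).2 _ h'
      have h0 : w.app c (elt E (s₁ - s₂)) = 0 := by rw [← hk]; exact hwj0 c k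
      rw [show elt E (s₁ - s₂) = elt E s₁ - elt E s₂ from rfl, map_sub, hs₁, hs₂,
        sub_eq_zero] at h0
      exact h0
    · intro z
      obtain ⟨s, hs⟩ := E.proj_lift c.unop.property hdZdefl (asMor E z)
      exact ⟨w.app c (elt E s), (hθspec c _ s rfl).trans (by rw [hs, elt_asMor])⟩
  refine ⟨Z, ⟨NatIso.ofComponents
    (fun c => (AddEquiv.ofBijective
      (show ↑(M.obj c) →+ ↑(((resYoneda E).obj Z).obj c) from (θ.app c).hom) (hbij c)).toAddCommGrpIso) (fun φ => by
      ext m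
      exact nat_app E θ φ m)⟩⟩

end Paper
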